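/- Let M be a matroid on a finite ground set E and let t ≥ 1. Then E can be partitioned into t (possibly empty) pairwise disjoint independent sets of M whose union is E if and only if there is no subset S ⊆ E with |S| > t · rank(S), i.e., if and only if |S| ≤ t · rank(S) for every S ⊆ E. -/

import Mathlib

open Set

namespace EdmondsAux

variable {α : Type*}

inductive Wit (M : Matroid α) {t : ℕ} (I : Fin t → Set α) : α → ℕ → Prop
  | sink (e : α) (i : Fin t) (he : e ∉ I i) (h : M.Indep (insert e (I i))) : Wit M I e 0
  | step (e x : α) (i : Fin t) (n : ℕ) (he : e ∉ I i) (hx : x ∈ I i)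
      (h : M.Indep (insert e (I i \ {x}))) (hw : Wit M I x n) : Wit M I e (n + 1)

lemma disj_insert_left {a : α} {s t : Set α} (ha : a ∉ t) (h : Disjoint s t) :
    Disjoint (insert a s) t := by
  rw [Set.insert_eq]
  exact Set.disjoint_union_left.2 ⟨Set.disjoint_singleton_left.2 ha, h⟩

lemma disj_insert_right {a : α} {s t : Set α} (ha : a ∉ s) (h : Disjoint s t) :
    Disjoint s (insert a t) :=
  (disj_insert_left ha h.symm).symm

lemma mem_closure_of_not_indep {M : Matroid α} {S : Set α} {y : α}
    (hS : M.Indep S) (hy : y ∉ S) (hyE : y ∈ M.E) (h : ¬ M.Indep (insert y S)) :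
    y ∈ M.closure S := by
  by_contra hc
  exact h ((hS.insert_indep_iff_of_notMem hy).2 ⟨hyE, hc⟩)

lemma not_mem_closure_of_indep {M : Matroid α} {S : Set α} {y : α}
    (h : M.Indep (insert y S)) (hy : y ∉ S) : y ∉ M.closure S :=
  (((h.subset (subset_insert _ _)).insert_indep_iff_of_notMem hy).1 h).2

lemma augment (M : Matroid α) {t : ℕ} (n : ℕ) :
    ∀ (I : Fin t → Set α), (∀ i, M.Indep (I i)) → (∀ i j, i ≠ j → Disjoint (I i) (I j)) →
    ∀ e, e ∈ M.E → e ∉ (⋃ i, I i) → Wit M I e n →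
    ∃ J : Fin t → Set α, (∀ i, M.Indep (J i)) ∧ (∀ i j, i ≠ j → Disjoint (J i) (J j)) ∧
      (⋃ i, J i) = insert e (⋃ i, I i) := by
  classical
  induction n using Nat.strong_induction_on with
  | _ n IH =>
  intro I hind hdis e heE heU hw
  have hex : ∃ m, Wit M I e m := ⟨n, hw⟩
  obtain ⟨n₀, hn₀n, hw₀, hmin⟩ :
      ∃ n₀, n₀ ≤ n ∧ Wit M I e n₀ ∧ ∀ m, m < n₀ → ¬ Wit M I e m :=
    ⟨Nat.find hex, Nat.find_min' hex hw, Nat.find_spec hex, fun m hm => Nat.find_min hex hm⟩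
  have heI : ∀ i, e ∉ I i := fun i hi => heU (mem_iUnion.2 ⟨i, hi⟩)
  cases hw₀ with
  | sink _ i _ hins =>
    refine ⟨Function.update I i (insert e (I i)), ?_, ?_, ?_⟩
    · intro j
      by_cases hj : j = i
      · subst hj; rw [Function.update_self]; exact hins
      · rw [Function.update_of_ne hj]; exact hind j
    · intro j k hjk
      by_cases hj : j = i <;> by_cases hk : k = i
      · exact absurd (hj.trans hk.symm) hjk
      · subst hj; rw [Function.update_self, Function.update_of_ne hk]
        exact disj_insert_left (heI k) (hdis j k hjk)
      · subst hk; rw [Function.update_self, Function.update_of_ne hj]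
        exact disj_insert_right (heI j) (hdis j k hjk)
      · rw [Function.update_of_ne hj, Function.update_of_ne hk]; exact hdis j k hjk
    · ext y
      simp only [mem_iUnion, mem_insert_iff]
      constructor
      · rintro ⟨j, hj⟩
        by_cases hji : j = i
        · subst hji; rw [Function.update_self] at hj
          rcases hj with rfl | hj
          · exact Or.inl rfl
          · exact Or.inr ⟨j, hj⟩
        · rw [Function.update_of_ne hji] at hj; exact Or.inr ⟨j, hj⟩
      · rintro (rfl | ⟨j, hj⟩)
        · exact ⟨i, by rw [Function.update_self]; exact mem_insert _ _⟩
        · by_cases hji : j = i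
          · subst hji; exact ⟨j, by rw [Function.update_self]; exact mem_insert_of_mem _ hj⟩
          · exact ⟨j, by rw [Function.update_of_ne hji]; exact hj⟩
  | step _ x₁ i₁ m _ hx₁ hins hwx₁ =>
    set J := Function.update I i₁ (insert e (I i₁ \ {x₁})) with hJdef
    have hJi₁ : J i₁ = insert e (I i₁ \ {x₁}) := Function.update_self _ _ _
    have hJne : ∀ j, j ≠ i₁ → J j = I j := fun j hj => Function.update_of_ne hj _ _
    have hJind : ∀ j, M.Indep (J j) := by
      intro j
      by_cases hj : j = i₁
      · subst hj; rw [hJi₁]; exact hins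
      · rw [hJne j hj]; exact hind j
    have hJdis : ∀ i j, i ≠ j → Disjoint (J i) (J j) := by
      intro j k hjk
      by_cases hj : j = i₁ <;> by_cases hk : k = i₁
      · exact absurd (hj.trans hk.symm) hjk
      · subst hj; rw [hJi₁, hJne k hk]
        exact disj_insert_left (heI k) (Disjoint.mono_left diff_subset (hdis j k hjk))
      · subst hk; rw [hJi₁, hJne j hj]
        exact disj_insert_right (heI j) (Disjoint.mono_right diff_subset (hdis j k hjk))
      · rw [hJne j hj, hJne k hk]; exact hdis j k hjk
    have hx₁E : x₁ ∈ M.E := (hind i₁).subset_ground hx₁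
    have hx₁e : x₁ ≠ e := fun h => heI i₁ (h ▸ hx₁)
    have hx₁J : x₁ ∉ ⋃ j, J j := by
      rintro hmem
      obtain ⟨j, hj⟩ := mem_iUnion.1 hmem
      by_cases hji : j = i₁
      · subst hji; rw [hJi₁] at hj
        rcases hj with h | h
        · exact hx₁e h
        · exact h.2 rfl
      · rw [hJne j hji] at hj
        exact Set.disjoint_left.1 (hdis j i₁ hji) hj hx₁
    have hecl : e ∈ M.closure (I i₁) :=
      mem_closure_of_not_indep (hind i₁) (heI i₁) heE
        (fun h => hmin 0 (Nat.succ_pos m) (Wit.sink e i₁ (heI i₁) h))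
    have claim : ∀ m' x', Wit M I x' m' → m' < m + 1 → x' ∈ (⋃ j, I j) → Wit M J x' m' := by
      intro m' x' hw'
      induction hw' with
      | sink y i hyI hyins =>
        intro _ hyU
        have hyne : y ≠ e := fun h => heU (h ▸ hyU)
        have hyE : y ∈ M.E := by
          obtain ⟨j, hj⟩ := mem_iUnion.1 hyU
          exact (hind j).subset_ground hj
        by_cases hii : i = i₁
        · subst hii
          have hyJ : y ∉ J i := by
            rw [hJi₁]
            rintro (h | h)
            · exact hyne h
            · exact hyI h.1
          refine Wit.sink y i hyJ ?_
          rw [hJi₁]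
          by_contra hcon
          have hyJ' : y ∉ insert e (I i \ {x₁}) := by rw [← hJi₁]; exact hyJ
          have hycl : y ∈ M.closure (insert e (I i \ {x₁})) :=
            mem_closure_of_not_indep hins hyJ' hyE hcon
          have hsub : insert e (I i \ {x₁}) ⊆ M.closure (I i) :=
            insert_subset hecl (diff_subset.trans (M.subset_closure (I i) (hind i).subset_ground))
          have hy2 : y ∈ M.closure (I i) :=
            M.closure_subset_closure_of_subset_closure hsub hycl
          exact (((hind i).insert_indep_iff_of_notMem hyI).1 hyins).2 hy2
        · refine Wit.sink y i ?_ ?_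
          · rw [hJne i hii]; exact hyI
          · rw [hJne i hii]; exact hyins
      | step y w i' n' hyI hwI hwins hww IHw =>
        intro hlt hyU
        have hwU : w ∈ ⋃ j, I j := mem_iUnion.2 ⟨i', hwI⟩
        have hJw : Wit M J w n' := IHw (Nat.lt_of_succ_lt hlt) hwU
        have hyne : y ≠ e := fun h => heU (h ▸ hyU)
        have hyE : y ∈ M.E := by
          obtain ⟨j, hj⟩ := mem_iUnion.1 hyU
          exact (hind j).subset_ground hj
        by_cases hii : i' = i₁
        · subst hii
          have hwne : w ≠ x₁ := by
            rintro rfl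
            exact hmin (n' + 1) hlt (Wit.step e w i' n' (heI i') hx₁ hins hww)
          have hshort : ¬ M.Indep (insert e (I i' \ {w})) :=
            fun h => hmin (n' + 1) hlt (Wit.step e w i' n' (heI i') hwI h hww)
          have hecl' : e ∈ M.closure (I i' \ {w}) :=
            mem_closure_of_not_indep ((hind i').subset diff_subset)
              (fun h => heI i' h.1) heE hshort
          have hyncl : y ∉ M.closure (I i' \ {w}) :=
            not_mem_closure_of_indep hwins (fun h => hyI h.1)
          have hew : e ≠ w := fun h => heI i' (h ▸ hwI)
          have hyJ : y ∉ J i' := by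
            rw [hJi₁]
            rintro (h | h)
            · exact hyne h
            · exact hyI h.1
          have hwJ : w ∈ J i' := by
            rw [hJi₁]
            exact mem_insert_of_mem _ ⟨hwI, hwne⟩
          refine Wit.step y w i' n' hyJ hwJ ?_ hJw
          rw [hJi₁, ← insert_diff_singleton_comm hew]
          by_contra hcon
          have hXind : M.Indep (insert e ((I i' \ {x₁}) \ {w})) :=
            hins.subset (insert_subset_insert diff_subset)
          have hyX : y ∉ insert e ((I i' \ {x₁}) \ {w}) := by
            rintro (h | h)
            · exact hyne h
            · exact hyI h.1.1
          have hycl : y ∈ M.closure (insert e ((I i' \ {x₁}) \ {w})) :=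
            mem_closure_of_not_indep hXind hyX hyE hcon
          have hsub : insert e ((I i' \ {x₁}) \ {w}) ⊆ M.closure (I i' \ {w}) := by
            refine insert_subset hecl' ?_
            refine subset_trans ?_ (M.subset_closure (I i' \ {w})
              (diff_subset.trans (hind i').subset_ground))
            intro z hz
            exact ⟨hz.1.1, hz.2⟩
          exact hyncl (M.closure_subset_closure_of_subset_closure hsub hycl)
        · refine Wit.step y w i' n' ?_ ?_ ?_ hJw
          · rw [hJne i' hii]; exact hyI
          · rw [hJne i' hii]; exact hwI
          · rw [hJne i' hii]; exact hwins
    have hwx₁J : Wit M J x₁ m :=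
      claim m x₁ hwx₁ (Nat.lt_succ_self m) (mem_iUnion.2 ⟨i₁, hx₁⟩)
    obtain ⟨K, hKind, hKdis, hKun⟩ :=
      IH m (lt_of_lt_of_le (Nat.lt_succ_self m) hn₀n) J hJind hJdis x₁ hx₁E hx₁J hwx₁J
    refine ⟨K, hKind, hKdis, ?_⟩
    rw [hKun]
    ext y
    simp only [mem_insert_iff, mem_iUnion]
    constructor
    · rintro (rfl | ⟨j, hj⟩)
      · exact Or.inr ⟨i₁, hx₁⟩
      · by_cases hji : j = i₁
        · subst hji; rw [hJi₁] at hj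
          rcases hj with rfl | hj
          · exact Or.inl rfl
          · exact Or.inr ⟨j, hj.1⟩
        · rw [hJne j hji] at hj; exact Or.inr ⟨j, hj⟩
    · rintro (rfl | ⟨j, hj⟩)
      · exact Or.inr ⟨i₁, by rw [hJi₁]; exact mem_insert _ _⟩
      · by_cases hji : j = i₁
        · subst hji
          by_cases hyx : y = x₁
          · exact Or.inl hyx
          · exact Or.inr ⟨j, by rw [hJi₁]; exact mem_insert_of_mem _ ⟨hj, hyx⟩⟩
        · exact Or.inr ⟨j, by rw [hJne j hji]; exact hj⟩

inductive Reach (M : Matroid α) {t : ℕ} (I : Fin t → Set α) (e : α) : α → Prop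
  | base : Reach M I e e
  | step (y x : α) (i : Fin t) (hr : Reach M I e y) (hy : y ∉ I i) (hx : x ∈ I i)
      (h : M.Indep (insert y (I i \ {x}))) : Reach M I e x


lemma reach_subset {M : Matroid α} {t : ℕ} {I : Fin t → Set α} {e x : α}
    (h : Reach M I e x) : x ∈ insert e (⋃ i, I i) := by
  induction h with
  | base => exact mem_insert _ _
  | step y x i hr hy hx h IH => exact mem_insert_of_mem _ (mem_iUnion.2 ⟨i, hx⟩)

lemma closure_inter_reach {M : Matroid α} {t : ℕ} {I : Fin t → Set α} {e : α}
    (hfin : M.E.Finite) (hind : ∀ i, M.Indep (I i)) (heE : e ∈ M.E)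
    (hns : ∀ x, Reach M I e x → ∀ i, x ∉ I i → ¬ M.Indep (insert x (I i)))
    (hAE : {x | Reach M I e x} ⊆ M.E) (i : Fin t) :
    {x | Reach M I e x} ⊆ M.closure ({x | Reach M I e x} ∩ I i) := by
  set A := {x | Reach M I e x} with hA
  intro x hx
  by_cases hxi : x ∈ I i
  · exact M.subset_closure (A ∩ I i) (inter_subset_right.trans (hind i).subset_ground) ⟨hx, hxi⟩
  · have hxE : x ∈ M.E := hAE hx
    have hxcl : x ∈ M.closure (I i) :=
      mem_closure_of_not_indep (hind i) hxi hxE (hns x hx i hxi)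
    by_contra hc
    have hBind : M.Indep (A ∩ I i) := (hind i).subset inter_subset_right
    have hxB : x ∉ A ∩ I i := fun h => hxi h.2
    have hins : M.Indep (insert x (A ∩ I i)) :=
      (hBind.insert_indep_iff_of_notMem hxB).2 ⟨hxE, hc⟩
    obtain ⟨Jb, hJb, hsubJ⟩ := hins.subset_isBasis_of_subset
      (insert_subset_insert inter_subset_right)
      (insert_subset hxE (hind i).subset_ground)
    have hIbasis : M.IsBasis (I i) (insert x (I i)) :=
      (hind i).isBasis_closure.isBasis_subset (subset_insert _ _)
        (insert_subset hxcl (M.subset_closure _ (hind i).subset_ground))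
    have hnot : ¬ (I i ⊆ Jb) := by
      intro hsub
      have h1 : insert x (I i) ⊆ Jb := insert_subset (hsubJ (mem_insert _ _)) hsub
      have h2 : M.Indep (insert x (I i)) := hJb.indep.subset h1
      exact (((hind i).insert_indep_iff_of_notMem hxi).1 h2).2 hxcl
    obtain ⟨w, hwI, hwJ⟩ := not_subset.1 hnot
    have hxw : x ≠ w := fun h => hxi (h ▸ hwI)
    have hJsub : Jb ⊆ insert x (I i \ {w}) := by
      intro z hz
      rcases hJb.subset hz with rfl | hzI
      · exact mem_insert _ _
      · exact mem_insert_of_mem _ ⟨hzI, fun h => hwJ (h ▸ hz)⟩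
    have hencard : (insert x (I i \ {w})).encard ≤ Jb.encard := by
      have h1 : Jb.encard = (I i).encard := hJb.encard_eq_encard hIbasis
      have h2 : (insert x (I i \ {w})).encard = (I i \ {w}).encard + 1 :=
        encard_insert_of_notMem (fun h => hxi h.1)
      have h3 : (I i \ {w}).encard + 1 = (I i).encard := encard_diff_singleton_add_one hwI
      rw [h1, h2, h3]
    have hfinI : (insert x (I i \ {w})).Finite :=
      ((hfin.subset ((hind i).subset_ground)).diff (t := {w})).insert x
    have hJeq : Jb = insert x (I i \ {w}) :=
      Finite.eq_of_subset_of_encard_le' hfinI hJsub hencard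
    have hindep : M.Indep (insert x (I i \ {w})) := hJeq ▸ hJb.indep
    have hreach : Reach M I e w := Reach.step x w i hx hxi hwI hindep
    exact hwJ (hsubJ (mem_insert_of_mem _ ⟨hreach, hwI⟩))

lemma reach_wit {M : Matroid α} {t : ℕ} {I : Fin t → Set α} {e z : α}
    (hr : Reach M I e z) {n : ℕ} (hw : Wit M I z n) : ∃ m, Wit M I e m := by
  induction hr generalizing n with
  | base => exact ⟨n, hw⟩
  | step y x i hr hy hx h IH => exact IH (Wit.step y x i n hy hx h hw)

lemma ncard_le_of_indep_subset_closure {M : Matroid α} {K B : Set α}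
    (hK : M.Indep K) (hB : M.Indep B) (hBfin : B.Finite) (hKB : K ⊆ M.closure B) :
    K.ncard ≤ B.ncard := by
  obtain ⟨J, hJ, hKJ⟩ := hK.subset_isBasis_of_subset hKB (M.closure_subset_ground B)
  have h1 : J.encard = B.encard := hJ.encard_eq_encard hB.isBasis_closure
  have h2 : K.encard ≤ B.encard := h1 ▸ encard_mono hKJ
  rw [Set.ncard_def, Set.ncard_def]
  exact ENat.toNat_le_toNat h2 hBfin.encard_lt_top.ne

lemma ncard_biUnion_eq {t : ℕ} (f : Fin t → Set α)
    (hdis : ∀ i j, i ≠ j → Disjoint (f i) (f j)) (hfin : ∀ i, (f i).Finite) :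
    (⋃ i, f i).ncard = ∑ i, (f i).ncard := by
  have key : ∀ s : Finset (Fin t), (⋃ i ∈ s, f i).ncard = ∑ i ∈ s, (f i).ncard := by
    intro s
    induction s using Finset.induction_on with
    | empty => simp
    | insert a s hx IH =>
      rw [Finset.sum_insert hx, Finset.set_biUnion_insert, Set.ncard_union_eq ?_ (hfin a) ?_, IH]
      · exact Set.disjoint_iUnion₂_right.2 fun j hj => hdis a j (by rintro rfl; exact hx hj)
      · exact Set.Finite.biUnion s.finite_toSet (fun j _ => hfin j)
  have := key Finset.univ
  simpa using this

end EdmondsAux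

/-- The rank of a set `S` in a matroid `M`: the common (here: maximal) size of
independent subsets of `S`. -/
noncomputable def matroidRank {α : Type*} (M : Matroid α) (S : Set α) : ℕ :=
  sSup (Set.ncard '' {I : Set α | M.Indep I ∧ I ⊆ S})

namespace EdmondsAux

lemma rank_le {α : Type*} {M : Matroid α} {S : Set α} {c : ℕ}
    (h : ∀ K, M.Indep K → K ⊆ S → K.ncard ≤ c) : matroidRank M S ≤ c := by
  have hne : (Set.ncard '' {I : Set α | M.Indep I ∧ I ⊆ S}).Nonempty :=
    ⟨(∅ : Set α).ncard, ⟨∅, ⟨M.empty_indep, empty_subset _⟩, rfl⟩⟩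
  apply csSup_le hne
  rintro x ⟨K, ⟨hK, hKS⟩, rfl⟩
  exact h K hK hKS

lemma le_rank {α : Type*} {M : Matroid α} {S K : Set α} (hfin : S.Finite)
    (hK : M.Indep K) (hKS : K ⊆ S) : K.ncard ≤ matroidRank M S := by
  have hbdd : BddAbove (Set.ncard '' {I : Set α | M.Indep I ∧ I ⊆ S}) := by
    refine ⟨S.ncard, ?_⟩
    rintro x ⟨L, ⟨_, hLS⟩, rfl⟩
    exact Set.ncard_le_ncard hLS hfin
  exact le_csSup hbdd ⟨K, ⟨hK, hKS⟩, rfl⟩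

end EdmondsAux

open EdmondsAux in
/-- Edmonds' matroid partition theorem: the ground set of a (finite) matroid can be
partitioned into `t` independent sets iff `|S| ≤ t · rank(S)` for every subset `S` of the
ground set. -/
theorem stmt10 {α : Type*} (M : Matroid α) (hfin : M.E.Finite) (t : ℕ) (ht : 1 ≤ t) :
    (∃ P : Fin t → Set α,
        (∀ i j : Fin t, i ≠ j → Disjoint (P i) (P j)) ∧
        (∀ i, M.Indep (P i)) ∧
        (⋃ i, P i) = M.E)
      ↔ ∀ S : Set α, S ⊆ M.E → S.ncard ≤ t * matroidRank M S := by
  constructor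
  · rintro ⟨P, hdis, hind, hun⟩ S hS
    have hSfin : S.Finite := hfin.subset hS
    have hcov : S = ⋃ i, (P i ∩ S) := by
      rw [← iUnion_inter, hun]
      exact (inter_eq_self_of_subset_right hS).symm
    have hle : S.ncard = ∑ i, (P i ∩ S).ncard := by
      calc S.ncard = (⋃ i, P i ∩ S).ncard := by rw [← hcov]
        _ = ∑ i, (P i ∩ S).ncard :=
          ncard_biUnion_eq _ (fun i j hij => (hdis i j hij).mono inter_subset_left
            inter_subset_left) (fun i => hSfin.subset inter_subset_right)
    have hbound : ∀ i : Fin t, (P i ∩ S).ncard ≤ matroidRank M S := fun i =>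
      le_rank hSfin ((hind i).subset inter_subset_left) inter_subset_right
    calc S.ncard = ∑ i, (P i ∩ S).ncard := hle
      _ ≤ ∑ _i : Fin t, matroidRank M S := Finset.sum_le_sum (fun i _ => hbound i)
      _ = t * matroidRank M S := by
          simp [Finset.sum_const, Finset.card_univ, mul_comm]
  · intro hcond
    have main : ∀ k (I : Fin t → Set α), (∀ i, M.Indep (I i)) →
        (∀ i j, i ≠ j → Disjoint (I i) (I j)) → (M.E \ ⋃ i, I i).ncard ≤ k →
        ∃ P : Fin t → Set α,
          (∀ i j : Fin t, i ≠ j → Disjoint (P i) (P j)) ∧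
          (∀ i, M.Indep (P i)) ∧
          (⋃ i, P i) = M.E := by
      intro k
      induction k with
      | zero =>
        intro I hind hdis hcard
        have hsub : ⋃ i, I i ⊆ M.E := iUnion_subset fun i => (hind i).subset_ground
        have hfd : (M.E \ ⋃ i, I i).Finite := hfin.diff
        have h0 : (M.E \ ⋃ i, I i) = ∅ := by
          rw [← ncard_eq_zero hfd]
          omega
        exact ⟨I, hdis, hind, subset_antisymm hsub (diff_eq_empty.1 h0)⟩
      | succ k IHk =>
        intro I hind hdis hcard
        have hsub : ⋃ i, I i ⊆ M.E := iUnion_subset fun i => (hind i).subset_ground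
        by_cases hall : ⋃ i, I i = M.E
        · exact ⟨I, hdis, hind, hall⟩
        · have hne : (M.E \ ⋃ i, I i).Nonempty :=
            diff_nonempty.2 (fun h => hall (subset_antisymm hsub h))
          obtain ⟨e, heE, heU⟩ := hne
          have hwit : ∃ n, Wit M I e n := by
            by_contra hno
            push_neg at hno
            have heA : Reach M I e e := Reach.base
            have hAsub : {x | Reach M I e x} ⊆ insert e (⋃ i, I i) :=
              fun x hx => reach_subset hx
            have hAE : {x | Reach M I e x} ⊆ M.E :=
              hAsub.trans (insert_subset heE hsub)
            have hAfin : {x | Reach M I e x}.Finite := hfin.subset hAE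
            have hns : ∀ x, Reach M I e x → ∀ i, x ∉ I i → ¬M.Indep (insert x (I i)) := by
              intro x hr i hxi hcon
              obtain ⟨mm, hwm⟩ := reach_wit hr (Wit.sink x i hxi hcon)
              exact hno mm hwm
            have hcl : ∀ i, {x | Reach M I e x} ⊆
                M.closure ({x | Reach M I e x} ∩ I i) :=
              fun i => closure_inter_reach hfin hind heE hns hAE i
            have hrank : ∀ i : Fin t,
                matroidRank M {x | Reach M I e x} ≤ ({x | Reach M I e x} ∩ I i).ncard := by
              intro i
              apply EdmondsAux.rank_le
              intro K hK hKA
              exact ncard_le_of_indep_subset_closure hK ((hind i).subset inter_subset_right)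
                (hAfin.subset inter_subset_left) (hKA.trans (hcl i))
            have hsum : t * matroidRank M {x | Reach M I e x} ≤
                ∑ i : Fin t, ({x | Reach M I e x} ∩ I i).ncard := by
              calc t * matroidRank M {x | Reach M I e x}
                  = ∑ _i : Fin t, matroidRank M {x | Reach M I e x} := by
                    simp [Finset.sum_const, Finset.card_univ, mul_comm]
                _ ≤ ∑ i : Fin t, ({x | Reach M I e x} ∩ I i).ncard :=
                    Finset.sum_le_sum fun i _ => hrank i
            have hUeq : (⋃ i, {x | Reach M I e x} ∩ I i) = {x | Reach M I e x} \ {e} := by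
              rw [← inter_iUnion]
              ext z
              constructor
              · rintro ⟨hzA, hzU⟩
                exact ⟨hzA, fun h => heU (mem_singleton_iff.1 h ▸ hzU)⟩
              · rintro ⟨hzA, hze⟩
                refine ⟨hzA, ?_⟩
                rcases hAsub hzA with rfl | h
                · exact absurd rfl hze
                · exact h
            have hsum2 : ∑ i : Fin t, ({x | Reach M I e x} ∩ I i).ncard =
                ({x | Reach M I e x} \ {e}).ncard := by
              rw [← ncard_biUnion_eq _
                (fun i j hij => (hdis i j hij).mono inter_subset_right inter_subset_right)
                (fun i => hAfin.subset inter_subset_left), hUeq]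
            have hlt : ({x | Reach M I e x} \ {e}).ncard < {x | Reach M I e x}.ncard :=
              ncard_diff_singleton_lt_of_mem heA hAfin
            have hcontra := hcond {x | Reach M I e x} hAE
            omega
          obtain ⟨n, hw⟩ := hwit
          obtain ⟨J, hJind, hJdis, hJun⟩ := augment M n I hind hdis e heE heU hw
          apply IHk J hJind hJdis
          rw [hJun]
          have hde : M.E \ insert e (⋃ i, I i) = (M.E \ ⋃ i, I i) \ {e} := by
            ext z
            simp only [mem_diff, mem_insert_iff, mem_singleton_iff]
            tauto
          rw [hde]
          have hlt : ((M.E \ ⋃ i, I i) \ {e}).ncard < (M.E \ ⋃ i, I i).ncard :=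
            ncard_diff_singleton_lt_of_mem ⟨heE, heU⟩ hfin.diff
          omega
    obtain ⟨P, h1, h2, h3⟩ := main (M.E \ ⋃ i, (fun _ : Fin t => (∅ : Set α)) i).ncard
      (fun _ => ∅) (fun _ => M.empty_indep)
      (fun _ _ _ => (disjoint_bot_right : Disjoint _ ⊥)) le_rfl
    exact ⟨P, h1, h2, h3⟩
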